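/- arXiv:0910.3830 — 6 statements merged into one kernel-verified Lean document; each statement's English description precedes it below -/
import Mathlib

section
/- Let I be a strongly stable monomial ideal in k[x_1,...,x_n] and suppose max(M_ω(I)) = n, where M_ω(I) is the last generator of I. If M is a monomial of degree d lying in (I : x_n) whose image in (I : x_n)/I is nonzero (i.e., M ∉ I but M·x_n ∈ I), then M·x_n is a minimal generator of I. -/
open scoped Classical

/-- Degree of an exponent vector (monomial). -/
def mdeg {n : ℕ} (m : Fin n → ℕ) : ℕ := ∑ i, m i

/-- Degree reverse lexicographic order: `M > N`. -/
def RevLexGT {n : ℕ} (M N : Fin n → ℕ) : Prop :=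
  mdeg N < mdeg M ∨
    (mdeg M = mdeg N ∧ ∃ s : Fin n, (∀ i : Fin n, s < i → M i = N i) ∧ M s < N s)

/-- A monomial ideal, identified with its set of monomials (exponent vectors),
is upward closed under divisibility. -/
def MonIdeal {n : ℕ} (I : Set (Fin n → ℕ)) : Prop :=
  ∀ m ∈ I, ∀ m' : Fin n → ℕ, (∀ i, m i ≤ m' i) → m' ∈ I

/-- `m` is a minimal generator of the monomial ideal `I`. -/
def MinGen {n : ℕ} (I : Set (Fin n → ℕ)) (m : Fin n → ℕ) : Prop :=
  m ∈ I ∧ ∀ m' ∈ I, (∀ i, m' i ≤ m i) → m' = m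

/-- Almost reverse lexicographic ideal. -/
def ARL {n : ℕ} (I : Set (Fin n → ℕ)) : Prop :=
  ∀ M N : Fin n → ℕ, MinGen I N → mdeg M = mdeg N → RevLexGT M N → M ∈ I

/-- Strongly stable monomial ideal. -/
def StronglyStable {n : ℕ} (I : Set (Fin n → ℕ)) : Prop :=
  MonIdeal I ∧ ∀ M ∈ I, ∀ i j : Fin n, j < i → 0 < M i →
    (fun k => if k = i then M i - 1 else if k = j then M j + 1 else M k) ∈ I

/-- The last generator `M_ω` of a monomial ideal: a minimal generator of maximal
degree which is smallest in the degree reverse lexicographic order among the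
minimal generators of that degree. -/
def IsLastGen {n : ℕ} (I : Set (Fin n → ℕ)) (W : Fin n → ℕ) : Prop :=
  MinGen I W ∧ (∀ N, MinGen I N → mdeg N ≤ mdeg W) ∧
    (∀ N, MinGen I N → mdeg N = mdeg W → N = W ∨ RevLexGT N W)

/-- `max M`: the largest (1-based) index of a variable dividing `M` (0 for `M = 1`). -/
def maxVar {n : ℕ} (m : Fin n → ℕ) : ℕ :=
  Finset.univ.sup (fun i : Fin n => if 0 < m i then i.1 + 1 else 0)

/-- Hilbert function of `R/I`: the number of monomials of degree `d` not in `I`. -/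
noncomputable def hilb {n : ℕ} (I : Set (Fin n → ℕ)) (d : ℕ) : ℕ :=
  Set.ncard {m : Fin n → ℕ | mdeg m = d ∧ m ∉ I}

/-- Truncation of an exponent vector to its first `i` coordinates. -/
def truncW {n : ℕ} (W : Fin n → ℕ) (i : ℕ) : Fin n → ℕ :=
  fun j => if j.1 < i then W j else 0

/-- The set `𝓘_i` (for `i ≤ μ-2`): exponent vectors supported on the first `i`
coordinates, coordinatewise below the `f_j`'s, i.e. not lying in `I`. -/
def Iset {n : ℕ} (I : Set (Fin n → ℕ)) (i : ℕ) : Set (Fin n → ℕ) :=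
  {α | (∀ k : Fin n, i ≤ k.1 → α k = 0) ∧ α ∉ I}

/-- The set `𝓘_{μ-1}`, which additionally requires `α ≥ (ω_1,…,ω_{μ-1})`. -/
def IsetLast {n : ℕ} (I : Set (Fin n → ℕ)) (W : Fin n → ℕ) (μ : ℕ) :
    Set (Fin n → ℕ) :=
  {α | α ∈ Iset I (μ - 1) ∧ (α = truncW W (μ - 1) ∨ RevLexGT α (truncW W (μ - 1)))}

/-- `f_{i+1}(α) = min {t : x^α x_{i+1}^t ∈ I}` (ℕ-valued, junk `0` if no such `t`). -/
noncomputable def fmin {n : ℕ} (I : Set (Fin n → ℕ)) (α : Fin n → ℕ) (i : Fin n) : ℕ :=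
  sInf {t | α + Pi.single i t ∈ I}

/-- `f_{i+1}(α)` valued in `ℕ∞` (equal to `⊤` when no power works). -/
noncomputable def fminTop {n : ℕ} (I : Set (Fin n → ℕ)) (α : Fin n → ℕ) (i : Fin n) : ℕ∞ :=
  sInf ((fun t : ℕ => (t : ℕ∞)) '' {t | α + Pi.single i t ∈ I})

/-- Iterated truncated difference sequence `h^{(i)}`. -/
def hseq (h : ℕ → ℕ) : ℕ → ℕ → ℕ
  | 0, d => h d
  | _ + 1, 0 => 1
  | i + 1, e + 1 => hseq h i (e + 1) - hseq h i e

/-- The set whose infimum is `r_i(h)`. -/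
def rset (h : ℕ → ℕ) (i : ℕ) : Set ℕ :=
  {d | 1 ≤ d ∧ hseq h i d ≤ hseq h i (d - 1)}

/-- `D(h) = min {i : r_i < ∞}`. -/
noncomputable def Dval (h : ℕ → ℕ) : ℕ := sInf {i | (rset h i).Nonempty}

/-- `h` is unimodal at each tail. -/
def UnimodalAtTails (h : ℕ → ℕ) : Prop :=
  ∀ i, Dval h ≤ i → i < max 1 (h 1) →
    ∀ d, (∃ r ∈ rset h i, r ≤ d) → hseq h i d ≤ hseq h i (d - 1)

/-- The polynomial `Π (1 - z^{d_i})`. -/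
noncomputable def froPoly (ds : List ℕ) : Polynomial ℤ :=
  (ds.map (fun d => 1 - Polynomial.X ^ d)).prod

/-- Coefficient of `z^i` in the power series `Π (1 - z^{d_i}) / (1-z)^n`. -/
noncomputable def froCoeff (n : ℕ) (ds : List ℕ) (i : ℕ) : ℤ :=
  ∑ j ∈ Finset.range (i + 1),
    (froPoly ds).coeff j * (Nat.choose (n - 1 + (i - j)) (i - j) : ℤ)

/-- The Fröberg sequence `|n; d_1,…,d_m|`: the truncation `| · |` of the power
series `Π (1 - z^{d_i}) / (1-z)^n`. -/
noncomputable def fro (n : ℕ) (ds : List ℕ) (i : ℕ) : ℕ :=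
  if ∀ j ≤ i, 0 < froCoeff n ds j then (froCoeff n ds i).toNat else 0

/-- If `I` is strongly stable with `max M_ω(I) = n`, `M ∉ I` and
`M·x_n ∈ I`, then `M·x_n` is a minimal generator of `I`. -/
theorem colon_gives_minimal_generator {n : ℕ} (I : Set (Fin (n + 1) → ℕ))
    (hI : StronglyStable I) (W : Fin (n + 1) → ℕ) (hW : IsLastGen I W)
    (hWn : maxVar W = n + 1) (M : Fin (n + 1) → ℕ)
    (hM : M ∉ I) (hMx : M + Pi.single (Fin.last n) 1 ∈ I) :
    MinGen I (M + Pi.single (Fin.last n) 1) := by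
  refine ⟨hMx, fun m' hm' hle => ?_⟩
  by_cases hlast : m' (Fin.last n) ≤ M (Fin.last n)
  · -- then m' ≤ M pointwise, so M ∈ I, contradiction
    exact absurd (hI.1 m' hm' M (fun i => by
      by_cases hi : i = Fin.last n
      · subst hi; exact hlast
      · have := hle i; simpa [Pi.single_apply, hi] using this)) hM
  · have hlast' : m' (Fin.last n) = M (Fin.last n) + 1 := by
      have := hle (Fin.last n); simp [Pi.single_apply] at this; omega
    by_cases hall : ∀ j, m' j = (M + Pi.single (Fin.last n) 1 : Fin (n + 1) → ℕ) j
    · exact funext hall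
    · push_neg at hall
      obtain ⟨j, hj⟩ := hall
      have hjne : j ≠ Fin.last n := by
        intro h; subst h
        simp [Pi.single_apply] at hj
        omega
      have hjlt : m' j < M j := by
        have := hle j
        simp [Pi.single_apply, hjne] at hj this ⊢
        omega
      have hjlt' : j < Fin.last n := Fin.lt_last_iff_ne_last.mpr hjne
      have hpos : 0 < m' (Fin.last n) := by omega
      have hmem := hI.2 m' hm' (Fin.last n) j hjlt' hpos
      refine absurd (hI.1 _ hmem M (fun k => ?_)) hM
      by_cases hk : k = Fin.last n
      · subst hk; simp [hjne.symm]; omega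
      · by_cases hkj : k = j
        · subst hkj; simp [hk]; omega
        · have := hle k
          simp [Pi.single_apply, hk, hkj] at this ⊢
          omega
end

section
/- Let I be a strongly stable monomial ideal in R = k[x_1,...,x_n] with max(M_ω(I)) = n. Then for each d ≥ 0, the k-vector space dimension of ((I : x_n)/I)_d equals the number of minimal generators N of I with max N = n and deg N = d+1. -/
open scoped Classical

/-- `dim_k ((I : x_n)/I)_d` equals the number of minimal generators
`N` of `I` with `max N = n` and `deg N = d + 1`. -/
theorem colon_dim_eq_card_min_gens {n : ℕ} (I : Set (Fin (n + 1) → ℕ))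
    (hI : StronglyStable I) (W : Fin (n + 1) → ℕ) (hW : IsLastGen I W)
    (hWn : maxVar W = n + 1) (d : ℕ) :
    Set.ncard {m : Fin (n + 1) → ℕ |
        mdeg m = d ∧ m ∉ I ∧ m + Pi.single (Fin.last n) 1 ∈ I} =
      Set.ncard {N : Fin (n + 1) → ℕ |
        MinGen I N ∧ maxVar N = n + 1 ∧ mdeg N = d + 1} := by
  classical
  have hmon := hI.1
  have hss := hI.2
  set f : (Fin (n+1) → ℕ) → (Fin (n+1) → ℕ) := fun m => m + Pi.single (Fin.last n) 1
    with hfdef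
  have hf_apply : ∀ (m : Fin (n+1) → ℕ) (k : Fin (n+1)),
      f m k = m k + if k = Fin.last n then 1 else 0 := by
    intro m k
    simp only [hfdef, Pi.add_apply, Pi.single_apply]
  have hinj : Function.Injective f := by
    intro a b h
    exact add_right_cancel h
  have hdeg_f : ∀ m : Fin (n+1) → ℕ, mdeg (f m) = mdeg m + 1 := by
    intro m
    unfold mdeg
    simp only [hf_apply, Finset.sum_add_distrib]
    congr 1
    simp
  have key : {N : Fin (n + 1) → ℕ | MinGen I N ∧ maxVar N = n + 1 ∧ mdeg N = d + 1}
      = f '' {m : Fin (n + 1) → ℕ | mdeg m = d ∧ m ∉ I ∧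
          m + Pi.single (Fin.last n) 1 ∈ I} := by
    ext N
    simp only [Set.mem_setOf_eq, Set.mem_image]
    constructor
    · rintro ⟨hgen, hmax, hdeg⟩
      have hpos : 0 < N (Fin.last n) := by
        by_contra h
        push_neg at h
        have hle : maxVar N ≤ n := by
          apply Finset.sup_le
          intro i _
          split_ifs with hi
          · rcases eq_or_ne i (Fin.last n) with rfl | hne
            · omega
            · have hi' : i.1 < n := by
                have h1 : i.1 ≤ n := Nat.lt_succ_iff.mp i.isLt
                rcases lt_or_eq_of_le h1 with h' | h'
                · exact h'
                · exact absurd (Fin.ext h') hne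
              omega
          · omega
        omega
      set M : Fin (n+1) → ℕ := fun k => if k = Fin.last n then N (Fin.last n) - 1 else N k
        with hMdef
      have hNm : f M = N := by
        funext k
        rw [hf_apply]
        simp only [hMdef]
        split_ifs with hk
        · subst hk; omega
        · omega
      have hMdeg : mdeg M = d := by
        have := hdeg_f M
        rw [hNm, hdeg] at this
        omega
      have hMnotI : M ∉ I := by
        intro hmI
        have heq := hgen.2 M hmI (by
          intro i
          simp only [hMdef]
          split_ifs with hk
          · subst hk; omega
          · exact le_rfl)
        have h2 : N (Fin.last n) - 1 = N (Fin.last n) := by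
          have := congrFun heq (Fin.last n)
          simpa [hMdef] using this
        omega
      have hfMI : M + Pi.single (Fin.last n) 1 ∈ I := by
        have hr : M + Pi.single (Fin.last n) 1 = f M := rfl
        rw [hr, hNm]; exact hgen.1
      exact ⟨M, ⟨hMdeg, hMnotI, hfMI⟩, hNm⟩
    · rintro ⟨m, ⟨hdm, hmI, hfmI⟩, rfl⟩
      have hfm : f m ∈ I := hfmI
      refine ⟨⟨hfm, ?_⟩, ?_, ?_⟩
      · -- minimality
        intro m' hm'I hle
        by_contra hne
        have hlt : ∃ i, m' i < f m i := by
          by_contra h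
          push_neg at h
          exact hne (funext fun i => le_antisymm (hle i) (h i))
        obtain ⟨i, hi⟩ := hlt
        set N' : Fin (n+1) → ℕ := fun k => if k = i then f m i - 1 else f m k with hN'
        have hN'I : N' ∈ I := by
          apply hmon m' hm'I
          intro k
          simp only [hN']
          split_ifs with hk
          · subst hk; omega
          · exact hle k
        rcases eq_or_ne i (Fin.last n) with rfl | hne'
        · have hNm' : N' = m := by
            funext k
            simp only [hN']
            split_ifs with hk
            · subst hk; rw [hf_apply]; simp
            · rw [hf_apply]; simp [hk]
          rw [hNm'] at hN'I
          exact hmI hN'I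
        · have hilt : i < Fin.last n := lt_of_le_of_ne (Fin.le_last i) hne'
          have hposN' : 0 < N' (Fin.last n) := by
            simp only [hN', if_neg (Ne.symm hne')]
            rw [hf_apply]
            simp
          have hstep := hss N' hN'I (Fin.last n) i hilt hposN'
          have heq : (fun k => if k = Fin.last n then N' (Fin.last n) - 1
              else if k = i then N' i + 1 else N' k) = m := by
            funext k
            rcases eq_or_ne k (Fin.last n) with rfl | hk
            · simp only [if_pos rfl, hN', if_neg (Ne.symm hne')]
              rw [hf_apply]; simp
            · rw [if_neg hk]
              rcases eq_or_ne k i with rfl | hk'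
              · rw [if_pos rfl]
                have hNk : N' k = f m k - 1 := by simp [hN']
                have hp : 0 < f m k := by omega
                have hfk : f m k = m k := by simp [hf_apply, hk]
                omega
              · rw [if_neg hk']
                simp only [hN', if_neg hk']
                rw [hf_apply]
                simp [hk]
          rw [heq] at hstep
          exact absurd hstep hmI
      · -- maxVar
        have hposlast : 0 < f m (Fin.last n) := by rw [hf_apply]; simp
        unfold maxVar
        apply le_antisymm
        · apply Finset.sup_le
          intro i _
          split_ifs
          · omega
          · omega
        · have hls := Finset.le_sup (f := fun i : Fin (n+1) =>
            if 0 < f m i then i.1 + 1 else 0) (Finset.mem_univ (Fin.last n))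
          simp only [if_pos hposlast, Fin.val_last] at hls
          exact hls
      · rw [hdeg_f, hdm]
  exact (Set.ncard_image_of_injective _ hinj).symm.trans (congrArg Set.ncard key.symm)
end

section
/- If I is a nonzero almost reverse lexicographic ideal in R = k[x_1,...,x_n] whose last generator M_ω has max M_ω = μ and N, M are minimal generators of I with max N < max M, then deg N ≤ deg M. -/
open scoped Classical

lemma exists_le_sum_eq {n : ℕ} (m : Fin n → ℕ) :
    ∀ d, d ≤ mdeg m → ∃ m' : Fin n → ℕ, (∀ i, m' i ≤ m i) ∧ mdeg m' = d := by
  intro d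
  induction d with
  | zero => exact fun _ => ⟨fun _ => 0, fun i => Nat.zero_le _, by simp [mdeg]⟩
  | succ d ih =>
    intro hd
    obtain ⟨m', hle, hsum⟩ := ih (Nat.le_of_succ_le hd)
    have hlt : ∃ i, m' i < m i := by
      by_contra hc
      push_neg at hc
      have : mdeg m ≤ mdeg m' := Finset.sum_le_sum fun i _ => hc i
      omega
    obtain ⟨i, hi⟩ := hlt
    refine ⟨Function.update m' i (m' i + 1), ?_, ?_⟩
    · intro j
      rcases eq_or_ne j i with rfl | hj
      · rw [Function.update_self]; omega
      · rw [Function.update_of_ne hj]; exact hle j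
    · have h1 := Finset.sum_update_of_mem (f := m') (Finset.mem_univ i)
        (b := m' i + 1)
      have h2 := Finset.sum_eq_sum_sdiff_singleton_add (Finset.mem_univ i) m'
      simp only [mdeg] at *
      omega

/-- In a nonzero almost reverse lexicographic ideal, if `N, M` are
minimal generators with `max N < max M`, then `deg N ≤ deg M`. -/
theorem arl_deg_mono_in_maxVar {n μ : ℕ} (I : Set (Fin n → ℕ))
    (hne : I.Nonempty) (hI : MonIdeal I) (hARL : ARL I)
    (W : Fin n → ℕ) (hW : IsLastGen I W) (hμ : maxVar W = μ)
    (N M : Fin n → ℕ) (hN : MinGen I N) (hM : MinGen I M)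
    (h : maxVar N < maxVar M) : mdeg N ≤ mdeg M := by
  by_contra hlt
  push_neg at hlt
  have hMpos : 0 < maxVar M := lt_of_le_of_lt (Nat.zero_le _) h
  have hnpos : 0 < n := by
    rcases Nat.eq_zero_or_pos n with rfl | hp
    · simp [maxVar] at hMpos
    · exact hp
  haveI : Nonempty (Fin n) := ⟨⟨0, hnpos⟩⟩
  obtain ⟨i0, -, hi0⟩ := Finset.exists_mem_eq_sup Finset.univ Finset.univ_nonempty
    (fun i : Fin n => if 0 < M i then i.1 + 1 else 0)
  simp only [maxVar] at hMpos h
  rw [hi0] at hMpos h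
  have hMi0 : 0 < M i0 := by
    by_contra hc
    rw [if_neg hc] at hMpos
    omega
  rw [if_pos hMi0] at hMpos h
  have hMtop : ∀ j : Fin n, i0 < j → M j = 0 := by
    intro j hj
    by_contra hc
    have hle : (if 0 < M j then j.1 + 1 else 0) ≤ Finset.univ.sup
        (fun i : Fin n => if 0 < M i then i.1 + 1 else 0) :=
      Finset.le_sup (f := fun i : Fin n => if 0 < M i then i.1 + 1 else 0) (Finset.mem_univ j)
    rw [hi0, if_pos hMi0, if_pos (Nat.pos_of_ne_zero hc)] at hle
    have : (i0 : ℕ) < j := hj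
    omega
  have hNtop : ∀ j : Fin n, i0 ≤ j → N j = 0 := by
    intro j hj
    by_contra hc
    have hle : (if 0 < N j then j.1 + 1 else 0) ≤ maxVar N :=
      Finset.le_sup (f := fun i : Fin n => if 0 < N i then i.1 + 1 else 0) (Finset.mem_univ j)
    rw [if_pos (Nat.pos_of_ne_zero hc)] at hle
    rw [maxVar] at hle
    have : (i0 : ℕ) ≤ j := hj
    omega
  obtain ⟨N', hle, hdeg⟩ := exists_le_sum_eq N (mdeg M) (le_of_lt hlt)
  have hN'z : ∀ j : Fin n, i0 ≤ j → N' j = 0 := fun j hj =>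
    Nat.le_zero.mp ((hNtop j hj) ▸ hle j)
  have hgt : RevLexGT N' M := by
    refine Or.inr ⟨hdeg, i0, fun j hj => ?_, ?_⟩
    · rw [hN'z j (le_of_lt hj), hMtop j hj]
    · rw [hN'z i0 le_rfl]; exact hMi0
  have hmem : N' ∈ I := hARL N' M hM hdeg hgt
  have heq := hN.2 N' hmem hle
  rw [heq] at hdeg
  omega
end

section
/- Let I be an almost reverse lexicographic ideal in R = k[x_1,...,x_n] whose last generator M_ω satisfies max M_ω = n. Then for every d ≥ f, where f = min{t : x_{n-1}^t ∈ I}, one has H(R/I, d-1) - H(R/I, d) equal to the number of minimal generators M of I with max M = n and deg M = d; in particular H(R/I,d) ≤ H(R/I,d-1) for all d ≥ f. -/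
open scoped Classical

section AuxARL

lemma aux_mdeg_single {n : ℕ} (i : Fin n) (t : ℕ) : mdeg (Pi.single i t) = t := by
  simp [mdeg]

lemma aux_mdeg_update {N : ℕ} (u : Fin N → ℕ) (a : Fin N) (v : ℕ) :
    mdeg (Function.update u a v) + u a = mdeg u + v := by
  unfold mdeg
  rw [Finset.sum_update_of_mem (Finset.mem_univ a), Finset.sdiff_singleton_eq_erase,
    ← Finset.add_sum_erase _ u (Finset.mem_univ a)]
  omega

lemma aux_finite_deg (N d : ℕ) : {m : Fin N → ℕ | mdeg m = d}.Finite := by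
  apply Set.Finite.subset (Set.Finite.pi (fun i : Fin N => Set.finite_Iic d))
  intro m hm
  replace hm : mdeg m = d := hm
  simp only [Set.mem_pi, Set.mem_univ, Set.mem_Iic, forall_true_left]
  intro i
  have : m i ≤ mdeg m := Finset.single_le_sum (fun j _ => Nat.zero_le _) (Finset.mem_univ i)
  omega

lemma aux_exists_le_mdeg {N : ℕ} : ∀ (k : ℕ) (m : Fin N → ℕ) (e : ℕ), mdeg m = e + k →
    ∃ α : Fin N → ℕ, (∀ i, α i ≤ m i) ∧ mdeg α = e
  | 0, m, e, h => ⟨m, fun _ => le_rfl, by omega⟩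
  | k+1, m, e, h => by
    have hex : ∃ i, 0 < m i := by
      by_contra hc
      push_neg at hc
      have : mdeg m = 0 := Finset.sum_eq_zero (fun i _ => Nat.le_zero.mp (hc i))
      omega
    obtain ⟨i, hi⟩ := hex
    have hu := aux_mdeg_update m i (m i - 1)
    obtain ⟨α, h1, h2⟩ := aux_exists_le_mdeg k (Function.update m i (m i - 1)) e (by omega)
    refine ⟨α, fun j => ?_, h2⟩
    have := h1 j
    rcases eq_or_ne j i with rfl | hj
    · rw [Function.update_self] at this; omega
    · rwa [Function.update_of_ne hj] at this

lemma aux_mdeg_swap {N : ℕ} (g : Fin N → ℕ) (a b : Fin N) (hab : b ≠ a) (ha : 0 < g a) :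
    mdeg (fun k => if k = a then g a - 1 else if k = b then g b + 1 else g k) = mdeg g := by
  have hfun : (fun k => if k = a then g a - 1 else if k = b then g b + 1 else g k)
      = Function.update (Function.update g a (g a - 1)) b (g b + 1) := by
    funext k
    simp only [Function.update_apply]
    rcases eq_or_ne k a with rfl | hka
    · simp [hab, Ne.symm hab]
    · rcases eq_or_ne k b with rfl | hkb
      · simp [hka]
      · simp [hka, hkb]
  rw [hfun]
  have h1 := aux_mdeg_update g a (g a - 1)
  have h2 := aux_mdeg_update (Function.update g a (g a - 1)) b (g b + 1)
  have h3 : Function.update g a (g a - 1) b = g b := Function.update_of_ne hab _ _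
  omega

end AuxARL

/-- For an ARL ideal with `max M_ω = n` and `d ≥ f = min{t : x_{n-1}^t ∈ I}`,
`H(R/I,d-1) - H(R/I,d)` equals the number of minimal generators of degree `d`
with `max = n`; in particular `H(R/I,d) ≤ H(R/I,d-1)`. -/
theorem arl_hilbert_difference {n : ℕ} (I : Set (Fin (n + 2) → ℕ))
    (hI : MonIdeal I) (hARL : ARL I)
    (W : Fin (n + 2) → ℕ) (hW : IsLastGen I W) (hWn : maxVar W = n + 2)
    (d : ℕ) (hd : sInf {t | Pi.single (⟨n, by omega⟩ : Fin (n + 2)) t ∈ I} ≤ d) :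
    hilb I d ≤ hilb I (d - 1) ∧
      hilb I (d - 1) - hilb I d =
        Set.ncard {M : Fin (n + 2) → ℕ |
          MinGen I M ∧ maxVar M = n + 2 ∧ mdeg M = d} := by
  
  classical
  obtain ⟨idn, hidn⟩ : ∃ i : Fin (n + 2), i = ⟨n, by omega⟩ := ⟨_, rfl⟩
  obtain ⟨idl, hidl⟩ : ∃ i : Fin (n + 2), i = ⟨n + 1, by omega⟩ := ⟨_, rfl⟩
  have hidn1 : idn.1 = n := by rw [hidn]
  have hidl1 : idl.1 = n + 1 := by rw [hidl]
  have hln : idl ≠ idn := by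
    intro h
    have : idl.1 = idn.1 := congrArg Fin.val h
    omega
  have hsl' : (Pi.single idl 1 : Fin (n + 2) → ℕ) idl = 1 := by
    rw [Pi.single_apply, if_pos rfl]
  have hso' : ∀ i : Fin (n + 2), i ≠ idl → (Pi.single idl 1 : Fin (n + 2) → ℕ) i = 0 :=
    fun i hi => by rw [Pi.single_apply, if_neg hi]
  -- maxVar facts
  have hsup_le : ∀ M : Fin (n + 2) → ℕ, M idl = 0 → maxVar M ≤ n + 1 := by
    intro M h
    unfold maxVar
    apply Finset.sup_le
    intro i _
    by_cases hi : 0 < M i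
    · rw [if_pos hi]
      have h2 := i.2
      rcases eq_or_ne i idl with rfl | hne
      · omega
      · have hvne : i.1 ≠ idl.1 := fun hh => hne (Fin.val_injective hh)
        omega
    · rw [if_neg hi]; omega
  have hmaxpos : ∀ M : Fin (n + 2) → ℕ, maxVar M = n + 2 → 0 < M idl := by
    intro M hM
    by_contra h
    have := hsup_le M (by omega)
    omega
  have hmaxof : ∀ M : Fin (n + 2) → ℕ, 0 < M idl → maxVar M = n + 2 := by
    intro M hM
    have h1 : maxVar M ≤ n + 2 := by
      unfold maxVar
      apply Finset.sup_le
      intro i _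
      by_cases hi : 0 < M i
      · rw [if_pos hi]; have := i.2; omega
      · rw [if_neg hi]; omega
    have h2 : (if 0 < M idl then idl.1 + 1 else 0) ≤ maxVar M := by
      unfold maxVar
      exact Finset.le_sup (f := fun i : Fin (n + 2) => if 0 < M i then i.1 + 1 else 0)
        (Finset.mem_univ idl)
    rw [if_pos hM] at h2
    omega
  have hWl : 0 < W idl := hmaxpos W hWn
  have h0 : (0 : Fin (n + 2) → ℕ) ∉ I := by
    intro h0
    have hW0 := hW.1.2 0 h0 (fun i => Nat.zero_le _)
    rw [← hW0] at hWl
    simp at hWl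
  have hWS : Pi.single idn (mdeg W) ∈ I := by
    apply hARL _ W hW.1 (by rw [aux_mdeg_single])
    refine Or.inr ⟨by rw [aux_mdeg_single], idl, fun i hi => ?_, ?_⟩
    · exfalso
      have h1 := Fin.lt_def.mp hi
      have h2 := i.2
      omega
    · rw [Pi.single_apply, if_neg hln]
      exact hWl
  obtain ⟨f, hfdef⟩ : ∃ f, f = sInf {t | Pi.single idn t ∈ I} := ⟨_, rfl⟩
  have hd' : f ≤ d := by
    rw [hfdef, hidn]
    exact hd
  have hfS : Pi.single idn f ∈ I := by
    rw [hfdef]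
    exact Nat.sInf_mem (⟨mdeg W, hWS⟩ : Set.Nonempty {t | Pi.single idn t ∈ I})
  have hf1 : 1 ≤ f := by
    rcases Nat.eq_zero_or_pos f with h | h
    · exfalso
      rw [h, Pi.single_zero] at hfS
      exact h0 hfS
    · exact h
  have hd1 : 1 ≤ d := le_trans hf1 hd'
  -- the generator x_n^f is a minimal generator
  have hgmin : MinGen I (Pi.single idn f) := by
    refine ⟨hfS, fun m' hm' hle => ?_⟩
    have hze : ∀ j, j ≠ idn → m' j = 0 := by
      intro j hj
      have := hle j
      rw [Pi.single_apply, if_neg hj] at this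
      omega
    have hm'eq : m' = Pi.single idn (m' idn) := by
      funext j
      rcases eq_or_ne j idn with rfl | hj
      · rw [Pi.single_apply, if_pos rfl]
      · rw [Pi.single_apply, if_neg hj, hze j hj]
    have h2 : f ≤ m' idn := by
      rw [hfdef]
      exact Nat.sInf_le (show Pi.single idn (m' idn) ∈ I from hm'eq ▸ hm')
    have h3 : m' idn ≤ f := by
      have := hle idn
      rwa [Pi.single_apply, if_pos rfl] at this
    have h4 : m' idn = f := by omega
    rw [hm'eq, h4]
  -- Lemma A
  have lemA : ∀ α : Fin (n + 2) → ℕ, mdeg α = f → α idl = 0 → α ∈ I := by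
    intro α hdeg hl
    rcases eq_or_ne α (Pi.single idn f) with rfl | hne
    · exact hfS
    have hcoord : α idn < f := by
      have h1 : α idn ≤ mdeg α :=
        Finset.single_le_sum (fun j _ => Nat.zero_le _) (Finset.mem_univ idn)
      rcases lt_or_eq_of_le (hdeg ▸ h1) with h | h
      · exact h
      · exfalso
        apply hne
        funext j
        rcases eq_or_ne j idn with rfl | hj
        · rw [Pi.single_apply, if_pos rfl, h]
        · rw [Pi.single_apply, if_neg hj]
          by_contra hz
          have hsub : ({idn, j} : Finset (Fin (n + 2))).sum α ≤ mdeg α :=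
            Finset.sum_le_sum_of_subset (Finset.subset_univ _)
          rw [Finset.sum_pair (Ne.symm hj)] at hsub
          omega
    apply hARL α _ hgmin (by rw [aux_mdeg_single]; exact hdeg)
    refine Or.inr ⟨by rw [aux_mdeg_single]; exact hdeg, idn, fun i hi => ?_, ?_⟩
    · have h2 := i.2
      have hv : i.1 = n + 1 := by
        have := Fin.lt_def.mp hi
        omega
      have hieq : i = idl := Fin.val_injective (by omega)
      rw [hieq, hl, Pi.single_apply, if_neg hln]
    · rw [Pi.single_apply, if_pos rfl]
      exact hcoord
  -- Lemma B
  have lemB : ∀ m : Fin (n + 2) → ℕ, f ≤ mdeg m → m idl = 0 → m ∈ I := by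
    intro m hfm hl
    obtain ⟨k, hk⟩ := Nat.exists_eq_add_of_le hfm
    obtain ⟨α, hαle, hαdeg⟩ := aux_exists_le_mdeg k m f hk
    have hαl : α idl = 0 := by
      have := hαle idl
      omega
    exact hI α (lemA α hαdeg hαl) m hαle
  -- existence of minimal generators below elements
  have exMinGen : ∀ k : ℕ, ∀ m ∈ I, mdeg m ≤ k → ∃ g, MinGen I g ∧ ∀ i, g i ≤ m i := by
    intro k
    induction k with
    | zero =>
      intro m hm hk
      refine ⟨m, ⟨hm, fun m' hm' hle => funext fun i => ?_⟩, fun _ => le_rfl⟩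
      have h1 : m i ≤ mdeg m :=
        Finset.single_le_sum (fun j _ => Nat.zero_le _) (Finset.mem_univ i)
      have := hle i
      omega
    | succ k ih =>
      intro m hm hk
      by_cases hmin : ∀ m' ∈ I, (∀ i, m' i ≤ m i) → m' = m
      · exact ⟨m, ⟨hm, hmin⟩, fun _ => le_rfl⟩
      · push_neg at hmin
        obtain ⟨m', hm', hle, hne⟩ := hmin
        have hlt : mdeg m' < mdeg m := by
          have h1 : mdeg m' ≤ mdeg m := Finset.sum_le_sum (fun i _ => hle i)
          rcases lt_or_eq_of_le h1 with h | h
          · exact h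
          · exfalso
            apply hne
            funext i
            unfold mdeg at h
            exact (Finset.sum_eq_sum_iff_of_le (fun i _ => hle i)).mp h i (Finset.mem_univ i)
        obtain ⟨g, hg, hgle⟩ := ih m' hm' (by omega)
        exact ⟨g, hg, fun i => le_trans (hgle i) (hle i)⟩
  -- KEY: the only element of I dividing m·x_last (m ∉ I) is m·x_last itself
  have key : ∀ m : Fin (n + 2) → ℕ, m ∉ I → ∀ m' ∈ I,
      (∀ i, m' i ≤ m i + (Pi.single idl 1 : Fin (n + 2) → ℕ) i) → m' = m + Pi.single idl 1 := by
    intro m hm m' hm' hle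
    have hml : m' idl = m idl + 1 := by
      have h1 := hle idl
      rw [hsl'] at h1
      rcases Nat.lt_or_ge (m' idl) (m idl + 1) with h | h
      · exfalso
        apply hm
        apply hI m' hm' m
        intro i
        rcases eq_or_ne i idl with rfl | hi
        · omega
        · have h2 := hle i
          rw [hso' i hi] at h2
          omega
      · omega
    have hcoords : ∀ j, j ≠ idl → m' j = m j := by
      intro j hj
      have h1 := hle j
      rw [hso' j hj] at h1
      by_contra hne
      have hjlt : m' j < m j := by omega
      obtain ⟨g, hg, hgle⟩ := exMinGen (mdeg m') m' hm' le_rfl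
      rcases Nat.lt_or_ge (g idl) (m' idl) with hgl | hgl
      · apply hm
        apply hI g hg.1 m
        intro i
        rcases eq_or_ne i idl with rfl | hi
        · omega
        · have h2 := hgle i
          have h3 := hle i
          rw [hso' i hi] at h3
          omega
      · have hgeq : g idl = m idl + 1 := by
          have := hgle idl
          omega
        have hgpos : 0 < g idl := by omega
        have hdeg : mdeg (fun k => if k = idl then g idl - 1 else if k = j then g j + 1 else g k)
            = mdeg g := aux_mdeg_swap g idl j hj hgpos
        have hh'I : (fun k => if k = idl then g idl - 1 else if k = j then g j + 1 else g k) ∈ I := by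
          apply hARL _ g hg hdeg
          refine Or.inr ⟨hdeg, idl, fun i hi => ?_, ?_⟩
          · exfalso
            have := Fin.lt_def.mp hi
            have := i.2
            omega
          · show (if idl = idl then g idl - 1 else if idl = j then g j + 1 else g idl) < g idl
            rw [if_pos rfl]
            omega
        apply hm
        apply hI _ hh'I m
        intro i
        show (if i = idl then g idl - 1 else if i = j then g j + 1 else g i) ≤ m i
        rcases eq_or_ne i idl with rfl | hi
        · rw [if_pos rfl]; omega
        · rw [if_neg hi]
          rcases eq_or_ne i j with rfl | hij
          · rw [if_pos rfl]
            have := hgle i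
            omega
          · rw [if_neg hij]
            have h2 := hgle i
            have h3 := hle i
            rw [hso' i hi] at h3
            omega
    funext i
    rcases eq_or_ne i idl with rfl | hi
    · rw [Pi.add_apply, hsl']
      exact hml
    · rw [Pi.add_apply, hso' i hi, Nat.add_zero]
      exact hcoords i hi
  -- finiteness
  have hAd : {m : Fin (n + 2) → ℕ | mdeg m = d ∧ m ∉ I}.Finite :=
    (aux_finite_deg (n + 2) d).subset (fun m hm => hm.1)
  have hB : {M : Fin (n + 2) → ℕ | MinGen I M ∧ maxVar M = n + 2 ∧ mdeg M = d}.Finite :=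
    (aux_finite_deg (n + 2) d).subset (fun m hm => hm.2.2)
  have hmadd : ∀ m : Fin (n + 2) → ℕ, mdeg (m + Pi.single idl 1) = mdeg m + 1 := by
    intro m
    have h1 : mdeg (m + Pi.single idl 1) = mdeg m + mdeg (Pi.single idl 1) :=
      Finset.sum_add_distrib
    rw [h1, aux_mdeg_single]
  -- the image identity
  have himg : (fun m => m + Pi.single idl 1) '' {m : Fin (n + 2) → ℕ | mdeg m = d - 1 ∧ m ∉ I}
      = {m : Fin (n + 2) → ℕ | mdeg m = d ∧ m ∉ I} ∪
        {M : Fin (n + 2) → ℕ | MinGen I M ∧ maxVar M = n + 2 ∧ mdeg M = d} := by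
    ext x
    constructor
    · rintro ⟨m, ⟨hmd, hmI⟩, rfl⟩
      have hxd : mdeg (m + Pi.single idl 1) = d := by
        rw [hmadd m, hmd]
        omega
      by_cases hxI : (m + Pi.single idl 1) ∈ I
      · right
        refine ⟨⟨hxI, fun m' hm' hle => key m hmI m' hm' hle⟩, ?_, hxd⟩
        apply hmaxof
        show 0 < m idl + (Pi.single idl 1 : Fin (n + 2) → ℕ) idl
        rw [hsl']
        omega
      · left
        exact ⟨hxd, hxI⟩
    · rintro (⟨hxd, hxI⟩ | ⟨hxg, hxm, hxd⟩)
      · have hxl : 0 < x idl := by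
          by_contra h
          exact hxI (lemB x (by omega) (by omega))
        refine ⟨Function.update x idl (x idl - 1), ⟨?_, ?_⟩, ?_⟩
        · have := aux_mdeg_update x idl (x idl - 1)
          omega
        · intro hmem
          apply hxI
          apply hI _ hmem x
          intro i
          rcases eq_or_ne i idl with rfl | hi
          · rw [Function.update_self]; omega
          · rw [Function.update_of_ne hi]
        · funext i
          show Function.update x idl (x idl - 1) i + (Pi.single idl 1 : Fin (n + 2) → ℕ) i = x i
          rcases eq_or_ne i idl with rfl | hi
          · rw [Function.update_self, hsl']
            omega
          · rw [Function.update_of_ne hi, hso' i hi, Nat.add_zero]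
      · have hxl : 0 < x idl := hmaxpos x hxm
        refine ⟨Function.update x idl (x idl - 1), ⟨?_, ?_⟩, ?_⟩
        · have := aux_mdeg_update x idl (x idl - 1)
          omega
        · intro hmem
          have hle : ∀ i, Function.update x idl (x idl - 1) i ≤ x i := by
            intro i
            rcases eq_or_ne i idl with rfl | hi
            · rw [Function.update_self]; omega
            · rw [Function.update_of_ne hi]
          have h2 := congrFun (hxg.2 _ hmem hle) idl
          rw [Function.update_self] at h2
          omega
        · funext i
          show Function.update x idl (x idl - 1) i + (Pi.single idl 1 : Fin (n + 2) → ℕ) i = x i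
          rcases eq_or_ne i idl with rfl | hi
          · rw [Function.update_self, hsl']
            omega
          · rw [Function.update_of_ne hi, hso' i hi, Nat.add_zero]
  have hdisj : Disjoint {m : Fin (n + 2) → ℕ | mdeg m = d ∧ m ∉ I}
      {M : Fin (n + 2) → ℕ | MinGen I M ∧ maxVar M = n + 2 ∧ mdeg M = d} := by
    rw [Set.disjoint_left]
    rintro x ⟨_, hxI⟩ ⟨hxg, _, _⟩
    exact hxI hxg.1
  have hcount : hilb I (d - 1) = hilb I d +
      Set.ncard {M : Fin (n + 2) → ℕ | MinGen I M ∧ maxVar M = n + 2 ∧ mdeg M = d} := by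
    unfold hilb
    rw [← Set.ncard_image_of_injective {m : Fin (n + 2) → ℕ | mdeg m = d - 1 ∧ m ∉ I}
      (add_left_injective (Pi.single idl 1)), himg, Set.ncard_union_eq hdisj hAd hB]
  exact ⟨by omega, by omega⟩
end

section
/- Let I be an almost reverse lexicographic ideal in R = k[x_1,...,x_n] whose last generator M_ω satisfies max M_ω = n, and let f = min{t : x_{n-1}^t ∈ I}. Then for every d with 1 ≤ d < f, one has H(R/I,d) > H(R/I,d-1). -/
open scoped Classical

lemma exists_minGen_le {n : ℕ} (I : Set (Fin n → ℕ)) (N : Fin n → ℕ) (hN : N ∈ I) :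
    ∃ G, MinGen I G ∧ ∀ i, G i ≤ N i := by
  generalize hn : mdeg N = e
  induction e using Nat.strong_induction_on generalizing N with
  | _ e ih =>
    by_cases h : ∀ m' ∈ I, (∀ i, m' i ≤ N i) → m' = N
    · exact ⟨N, ⟨hN, h⟩, fun i => le_rfl⟩
    · push_neg at h
      obtain ⟨m', hm', hle, hne⟩ := h
      have hlt : mdeg m' < mdeg N := by
        obtain ⟨i, hi⟩ : ∃ i, m' i < N i := by
          by_contra hc; push_neg at hc
          exact hne (funext fun i => le_antisymm (hle i) (hc i))
        exact Finset.sum_lt_sum (fun i _ => hle i) ⟨i, Finset.mem_univ i, hi⟩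
      obtain ⟨G, hG, hGle⟩ := ih (mdeg m') (hn ▸ hlt) m' hm' rfl
      exact ⟨G, hG, fun i => (hGle i).trans (hle i)⟩

lemma mdeg_single {n : ℕ} (v : Fin n) (e : ℕ) : mdeg (Pi.single v e) = e := by
  simp [mdeg]

/-- For an ARL ideal with `max M_ω = n` and `1 ≤ d < f = min{t : x_{n-1}^t ∈ I}`,
the Hilbert function strictly increases: `H(R/I,d-1) < H(R/I,d)`. -/
theorem arl_hilbert_strict_increase {n : ℕ} (I : Set (Fin (n + 2) → ℕ))
    (hI : MonIdeal I) (hARL : ARL I)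
    (W : Fin (n + 2) → ℕ) (hW : IsLastGen I W) (hWn : maxVar W = n + 2)
    (d : ℕ) (hd1 : 1 ≤ d)
    (hd : d < sInf {t | Pi.single (⟨n, by omega⟩ : Fin (n + 2)) t ∈ I}) :
    hilb I (d - 1) < hilb I d := by
  classical
  set v : Fin (n + 2) := ⟨n, by omega⟩ with hv
  set w : Fin (n + 2) := ⟨n + 1, by omega⟩ with hw
  have hvw : v ≠ w := by simp [hv, hw, Fin.ext_iff]
  have hsingle_deg : ∀ (m : Fin (n + 2) → ℕ), mdeg (m + Pi.single w 1) = mdeg m + 1 := by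
    intro m
    simp [mdeg, Finset.sum_add_distrib]
  -- Key claim: multiplying a monomial of degree d-1 outside I by the last
  -- variable stays outside I.
  have key : ∀ m : Fin (n + 2) → ℕ, mdeg m = d - 1 → m ∉ I → m + Pi.single w 1 ∉ I := by
    intro m hm hmI hcon
    obtain ⟨G, ⟨hGI, hGmin⟩, hGle⟩ := exists_minGen_le I _ hcon
    have hGw : 0 < G w := by
      by_contra h
      push_neg at h
      apply hmI
      apply hI G hGI
      intro i
      rcases eq_or_ne i w with rfl | hne
      · omega
      · have := hGle i
        simpa [Pi.single_apply, hne] using this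
    have hGd : mdeg G ≤ d := by
      have h1 : mdeg G ≤ mdeg (m + Pi.single w 1) :=
        Finset.sum_le_sum fun i _ => hGle i
      rw [hsingle_deg, hm] at h1
      omega
    have hmem : Pi.single v (mdeg G) ∈ I := by
      apply hARL _ G ⟨hGI, hGmin⟩ (mdeg_single v (mdeg G))
      right
      refine ⟨mdeg_single v (mdeg G), w, fun i hi => ?_, ?_⟩
      · exact absurd hi (by have := i.isLt; simp [hw, Fin.lt_iff_val_lt_val]; omega)
      · simpa [Pi.single_apply, hvw.symm] using hGw
    have := Nat.sInf_le (show mdeg G ∈ {t | Pi.single v t ∈ I} from hmem)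
    omega
  -- The two sets and the injection
  set A := {m : Fin (n + 2) → ℕ | mdeg m = d - 1 ∧ m ∉ I} with hA
  set B := {m : Fin (n + 2) → ℕ | mdeg m = d ∧ m ∉ I} with hB
  have hBfin : B.Finite := by
    apply Set.Finite.subset (Set.Finite.pi (fun i : Fin (n + 2) => Set.finite_Iic d))
    intro m hm i _
    simp only [Set.mem_Iic]
    calc m i ≤ mdeg m :=
          Finset.single_le_sum (f := fun j => m j) (fun _ _ => Nat.zero_le _)
            (Finset.mem_univ i)
      _ = d := hm.1
  set φ : (Fin (n + 2) → ℕ) → (Fin (n + 2) → ℕ) := fun m => m + Pi.single w 1 with hφ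
  have hinj : Set.InjOn φ A := fun a _ b _ h => add_left_injective _ h
  have himg : φ '' A ⊆ B := by
    rintro _ ⟨m, ⟨hm1, hm2⟩, rfl⟩
    refine ⟨?_, key m hm1 hm2⟩
    rw [hφ]
    simp only
    rw [hsingle_deg, hm1]
    omega
  have hxB : Pi.single v d ∈ B := by
    refine ⟨mdeg_single v d, fun hmem => ?_⟩
    have := Nat.sInf_le (show d ∈ {t | Pi.single v t ∈ I} from hmem)
    omega
  have hxnot : Pi.single v d ∉ φ '' A := by
    rintro ⟨m, _, hm⟩
    have := congrFun hm w
    simp [hφ, Pi.single_apply, hvw.symm] at this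
  have hss : φ '' A ⊂ B := ⟨himg, fun hle => hxnot (hle hxB)⟩
  have h1 : hilb I (d - 1) = (φ '' A).ncard := (Set.ncard_image_of_injOn hinj).symm
  have h2 : (φ '' A).ncard < B.ncard := Set.ncard_lt_ncard hss hBfin
  exact h1 ▸ h2
end

section
/- Let I be a strongly stable ideal in k[x_1,...,x_n] with last generator M_ω = x^ω, max M_ω = μ ≥ 2, ω_μ > 0, and assume x_{μ-1}^t ∈ I for some t > 0. Then |𝓘_{μ-1}| ≤ Σ_{α ∈ 𝓘_{μ-2}} f_{μ-1}(α), with equality if and only if M_ω = x_μ^{ω_μ} (i.e. ω = (0,...,0,ω_μ)). In particular 𝓘_{μ-1} is finite. -/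
open scoped Classical

/-- In a strongly stable ideal, a pure power of a variable can be moved to any
smaller variable. -/
lemma single_move {n : ℕ} {I : Set (Fin n → ℕ)} (hI : StronglyStable I)
    {i j : Fin n} (hji : j < i) {t : ℕ} (h : Pi.single i t ∈ I) :
    Pi.single j t ∈ I := by
  have hij : j ≠ i := ne_of_lt hji
  have hij' : i ≠ j := hij.symm
  have key : ∀ s, s ≤ t →
      (fun k => if k = i then t - s else if k = j then s else 0) ∈ I := by
    intro s
    induction s with
    | zero =>
      intro _
      have heq : (fun k => if k = i then t - 0 else if k = j then 0 else 0)
          = Pi.single i t := by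
        funext k
        by_cases hk : k = i
        · subst hk; simp [Pi.single_apply]
        · simp [hk, Pi.single_apply]
      rw [heq]; exact h
    | succ s ih =>
      intro hs
      have hprev := ih (by omega)
      have hpos : 0 < (fun k => if k = i then t - s else if k = j then s else 0) i := by
        simp; omega
      have hmem := hI.2 _ hprev i j hji hpos
      have heq : (fun k => if k = i then
            (fun k => if k = i then t - s else if k = j then s else 0) i - 1
          else if k = j then
            (fun k => if k = i then t - s else if k = j then s else 0) j + 1
          else (fun k => if k = i then t - s else if k = j then s else 0) k)
          = (fun k => if k = i then t - (s + 1) else if k = j then s + 1 else 0) := by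
        funext k
        by_cases hk : k = i
        · subst hk; simp [hij']; omega
        · by_cases hk2 : k = j
          · subst hk2; simp [hk, hij]
          · simp [hk, hk2]
      rw [heq] at hmem
      exact hmem
  have hfin := key t le_rfl
  have heq : (fun k => if k = i then t - t else if k = j then t else 0)
      = Pi.single j t := by
    funext k
    by_cases hk : k = i
    · subst hk; simp [Pi.single_apply, hij']
    · by_cases hk2 : k = j
      · subst hk2; simp [hk, Pi.single_apply]
      · simp [hk, hk2, Pi.single_apply]
  rwa [heq] at hfin

/-- `|𝓘_{μ-1}| ≤ Σ_{α ∈ 𝓘_{μ-2}} f_{μ-1}(α)`, with equality iff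
`M_ω = x_μ^{ω_μ}`; in particular `𝓘_{μ-1}` is finite. -/
theorem card_last_Iset_le_sum {n μ : ℕ} (I : Set (Fin n → ℕ))
    (hI : StronglyStable I)
    (W : Fin n → ℕ) (hW : IsLastGen I W) (hmax : maxVar W = μ)
    (hμ : 2 ≤ μ) (hμn : μ ≤ n)
    (hpow : ∃ t, 0 < t ∧ Pi.single (⟨μ - 2, by omega⟩ : Fin n) t ∈ I) :
    (IsetLast I W μ).Finite ∧
    (IsetLast I W μ).ncard ≤ ∑ᶠ α ∈ Iset I (μ - 2), fmin I α ⟨μ - 2, by omega⟩ ∧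
    ((IsetLast I W μ).ncard = ∑ᶠ α ∈ Iset I (μ - 2), fmin I α ⟨μ - 2, by omega⟩ ↔
      ∀ j : Fin n, j.1 < μ - 1 → W j = 0) := by
  classical
  obtain ⟨t0, ht0, hpt0⟩ := hpow
  set e : Fin n := ⟨μ - 2, by omega⟩ with he
  -- pure powers of all variables up to e are in I
  have hsingle : ∀ j : Fin n, j.1 ≤ μ - 2 → Pi.single j t0 ∈ I := by
    intro j hj
    rcases eq_or_lt_of_le hj with h | h
    · have : j = e := Fin.ext h
      rwa [this]
    · exact single_move hI (show j < e from h) hpt0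
  -- fmin basic facts
  have hIe : ∀ α : Fin n → ℕ, α + Pi.single e t0 ∈ I := by
    intro α
    exact hI.1 _ hpt0 _ (fun k => Nat.le_add_left _ _)
  have hne : ∀ α : Fin n → ℕ, {t | α + Pi.single e t ∈ I}.Nonempty :=
    fun α => ⟨t0, hIe α⟩
  have hfmem : ∀ α : Fin n → ℕ, α + Pi.single e (fmin I α e) ∈ I :=
    fun α => Nat.sInf_mem (hne α)
  have hflt : ∀ (α : Fin n → ℕ) (b : ℕ), b < fmin I α e ↔ α + Pi.single e b ∉ I := by
    intro α b
    constructor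
    · intro h hmem
      have hle : fmin I α e ≤ b := Nat.sInf_le hmem
      omega
    · intro h
      by_contra hle
      push_neg at hle
      apply h
      refine hI.1 _ (hfmem α) _ (fun k => ?_)
      simp only [Pi.add_apply, Pi.single_apply]
      split <;> omega
  -- the box bound and finiteness of Iset I (μ-1)
  have hbound : ∀ β ∈ Iset I (μ - 1), ∀ k : Fin n, β k < t0 := by
    intro β hβ k
    by_cases hk : μ - 1 ≤ k.1
    · rw [hβ.1 k hk]; omega
    · by_contra hc
      push_neg at hc
      apply hβ.2
      refine hI.1 _ (hsingle k (by omega)) _ (fun l => ?_)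
      simp only [Pi.single_apply]
      split
      · next hl => subst hl; omega
      · omega
  have hfin1 : (Iset I (μ - 1)).Finite := by
    refine (Set.Finite.pi (fun _ : Fin n => Set.finite_Iio t0)).subset ?_
    intro β hβ
    rw [Set.mem_pi]
    intro k _
    exact hbound β hβ k
  have hSsub : Iset I (μ - 2) ⊆ Iset I (μ - 1) := by
    intro α hα
    exact ⟨fun k hk => hα.1 k (by omega), hα.2⟩
  have hfinS : (Iset I (μ - 2)).Finite := hfin1.subset hSsub
  set SF : Finset (Fin n → ℕ) := hfinS.toFinset with hSF
  have hαe0 : ∀ α ∈ Iset I (μ - 2), α e = 0 := fun α hα => hα.1 e (le_refl _)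
  -- the Finset description of Iset I (μ-1)
  set U : Finset (Fin n → ℕ) :=
    SF.biUnion (fun α => (Finset.range (fmin I α e)).image (fun b => α + Pi.single e b))
    with hU
  have hmemU : ∀ β : Fin n → ℕ, β ∈ U ↔ β ∈ Iset I (μ - 1) := by
    intro β
    constructor
    · intro hβ
      rw [hU, Finset.mem_biUnion] at hβ
      obtain ⟨α, hα, hβ'⟩ := hβ
      rw [Finset.mem_image] at hβ'
      obtain ⟨b, hb, rfl⟩ := hβ'
      rw [Finset.mem_range] at hb
      rw [hSF, Set.Finite.mem_toFinset] at hα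
      constructor
      · intro k hk
        have hke : k ≠ e := by
          intro hc; rw [hc] at hk; simp only [he] at hk; omega
        simp only [Pi.add_apply, Pi.single_apply, if_neg hke, add_zero]
        exact hα.1 k (by omega)
      · exact (hflt α b).mp hb
    · intro hβ
      rw [hU, Finset.mem_biUnion]
      refine ⟨Function.update β e 0, ?_, ?_⟩
      · rw [hSF, Set.Finite.mem_toFinset]
        constructor
        · intro k hk
          by_cases hke : k = e
          · rw [hke]; simp [Function.update]
          · rw [Function.update_of_ne hke]
            refine hβ.1 k ?_
            have : k.1 ≠ μ - 2 := fun hc => hke (Fin.ext hc)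
            omega
        · intro hc
          exact hβ.2 (hI.1 _ hc _ (fun k => by
            by_cases hke : k = e
            · rw [hke]; simp [Function.update]
            · rw [Function.update_of_ne hke]))
      · rw [Finset.mem_image]
        refine ⟨β e, ?_, ?_⟩
        · rw [Finset.mem_range]
          rw [hflt]
          have heq : Function.update β e 0 + Pi.single e (β e) = β := by
            funext k
            by_cases hke : k = e
            · subst hke; simp [Function.update]
            · simp [Function.update_of_ne hke, Pi.single_apply, hke]
          rw [heq]
          exact hβ.2
        · funext k
          by_cases hke : k = e
          · subst hke; simp [Function.update]
          · simp [Function.update_of_ne hke, Pi.single_apply, hke]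
  have hUcoe : Iset I (μ - 1) = ↑U := by
    ext β; rw [Finset.mem_coe, hmemU]
  -- the cardinality of U
  have hcardU : U.card = ∑ α ∈ SF, fmin I α e := by
    rw [hU]
    rw [Finset.card_biUnion]
    · apply Finset.sum_congr rfl
      intro α hα
      rw [Finset.card_image_of_injective, Finset.card_range]
      intro b b' hbb'
      have := congrFun hbb' e
      simpa using this
    · intro α hα α' hα' hαα'
      simp only [Finset.disjoint_left]
      intro β hβ hβ'
      rw [Finset.mem_image] at hβ hβ'
      obtain ⟨b, hb, rfl⟩ := hβ
      obtain ⟨b', hb', heq⟩ := hβ'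
      rw [hSF, Finset.mem_coe, Set.Finite.mem_toFinset] at hα hα'
      apply hαα'
      funext k
      by_cases hke : k = e
      · subst hke; rw [hαe0 α hα, hαe0 α' hα']
      · have := congrFun heq k
        simpa [Pi.single_apply, hke] using this.symm
  have hfinsum : ∑ᶠ α ∈ Iset I (μ - 2), fmin I α e = ∑ α ∈ SF, fmin I α e := by
    rw [← finsum_mem_coe_finset]
    congr 1
    rw [hSF, Set.Finite.coe_toFinset]
  have hcard1 : (Iset I (μ - 1)).ncard = ∑ᶠ α ∈ Iset I (μ - 2), fmin I α e := by
    rw [hUcoe, Set.ncard_coe_finset, hcardU, hfinsum]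
  have hsubLast : IsetLast I W μ ⊆ Iset I (μ - 1) := fun β hβ => hβ.1
  have hfinLast : (IsetLast I W μ).Finite := hfin1.subset hsubLast
  refine ⟨hfinLast, ?_, ?_⟩
  · rw [← hcard1]
    exact Set.ncard_le_ncard hsubLast hfin1
  constructor
  · -- equality → W j = 0 for j < μ - 1
    intro hceq
    by_contra hcon
    push_neg at hcon
    obtain ⟨j, hj, hWj⟩ := hcon
    set T : Fin n → ℕ := truncW W (μ - 1) with hT
    -- T ∉ I
    have hTnotI : T ∉ I := by
      intro hTI
      have hTle : ∀ k, T k ≤ W k := by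
        intro k
        rw [hT]; unfold truncW
        split <;> omega
      have hTW := hW.1.2 T hTI hTle
      -- but there is i0 with i0.1 = μ - 1 and W i0 > 0
      obtain ⟨i0, _, hi0⟩ := Finset.exists_mem_eq_sup (Finset.univ : Finset (Fin n))
        ⟨⟨0, by omega⟩, Finset.mem_univ _⟩
        (fun i : Fin n => if 0 < W i then i.1 + 1 else 0)
      rw [← maxVar, hmax] at hi0
      by_cases hWi0 : 0 < W i0
      · rw [if_pos hWi0] at hi0
        have hi0v : i0.1 = μ - 1 := by omega
        have : T i0 = 0 := by
          rw [hT]; unfold truncW; rw [if_neg (by omega)]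
        rw [hTW] at this
        omega
      · rw [if_neg hWi0] at hi0; omega
    have hTj : T j = W j := by
      rw [hT]; unfold truncW; rw [if_pos hj]
    set β : Fin n → ℕ := Function.update T j (W j - 1) with hβdef
    have hβle : ∀ k, β k ≤ T k := by
      intro k
      by_cases hk : k = j
      · subst hk; rw [hβdef, Function.update_self, hTj]; omega
      · rw [hβdef, Function.update_of_ne hk]
    have hβmem : β ∈ Iset I (μ - 1) := by
      constructor
      · intro k hk
        have hkj : k ≠ j := by
          intro hc; subst hc; omega
        rw [hβdef, Function.update_of_ne hkj, hT]
        unfold truncW; rw [if_neg (by omega)]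
      · intro hc
        exact hTnotI (hI.1 _ hc _ hβle)
    have hmdeg : mdeg β < mdeg T := by
      unfold mdeg
      refine Finset.sum_lt_sum (fun k _ => hβle k) ⟨j, Finset.mem_univ _, ?_⟩
      rw [hβdef, Function.update_self, hTj]
      omega
    have hβnotLast : β ∉ IsetLast I W μ := by
      intro hc
      rcases hc.2 with hceq' | hgt
      · rw [← hT] at hceq'
        rw [hceq'] at hmdeg
        omega
      · rw [← hT] at hgt
        rcases hgt with h1 | ⟨h2, _⟩ <;> omega
    have hss : IsetLast I W μ ⊂ Iset I (μ - 1) := by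
      rw [Set.ssubset_def]
      exact ⟨hsubLast, fun hc => hβnotLast (hc hβmem)⟩
    have := Set.ncard_lt_ncard hss hfin1
    rw [hcard1, hceq] at this
    omega
  · -- W j = 0 for j < μ - 1 → equality
    intro h0
    have hT0 : truncW W (μ - 1) = (fun _ => 0) := by
      funext k
      unfold truncW
      split
      · next hk => exact h0 k hk
      · rfl
    have heqset : IsetLast I W μ = Iset I (μ - 1) := by
      apply Set.eq_of_subset_of_subset hsubLast
      intro β hβ
      refine ⟨hβ, ?_⟩
      rw [hT0]
      rcases eq_or_ne β (fun _ => 0) with hβ0 | hβ0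
      · exact Or.inl hβ0
      · refine Or.inr (Or.inl ?_)
        have h1 : mdeg (fun _ : Fin n => 0) = 0 := by
          unfold mdeg; simp
        have h2 : 0 < mdeg β := by
          by_contra hc
          push_neg at hc
          apply hβ0
          funext k
          have : ∀ l ∈ Finset.univ, β l = 0 := by
            intro l _
            have := Finset.sum_eq_zero_iff.mp (Nat.le_zero.mp hc)
            exact this l (Finset.mem_univ _)
          exact this k (Finset.mem_univ _)
        omega
    rw [heqset, hcard1]
end
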